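/- Given an s-section (s, σ) of a crossed extension 0 → M → T →∂ R →p G → 0, the function f(x,y,z) = {}^{s(x)}σ(y,z) · σ(x,yz) · σ(xy,z)^{-1} · σ(x,y)^{-1} takes values in M = ker∂ and is a 3-cocycle of G with coefficients in M. -/
import Mathlib


/-- Given an s-section `(s,σ)` of a crossed extension
`0 → M → T →∂ R →p G → 0`, the function
`f(x,y,z) = {}^{s x}σ(y,z)·σ(x,yz)·σ(xy,z)⁻¹·σ(x,y)⁻¹` takes values in
`M = ker ∂` and is a 3-cocycle of `G` with coefficients in `M` (the
`G`-action on `M` is induced via the section: `x • m = {}^{s x} m`;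
the cocycle identity is written multiplicatively in the central
subgroup `ker ∂`). -/
theorem stmt6 {T R G : Type*} [Group T] [Group R] [Group G]
    [MulDistribMulAction R T] (δ : T →* R)
    -- crossed module axioms
    (hpeif1 : ∀ (r : R) (t : T), δ (r • t) = r * δ t * r⁻¹)
    (hpeif2 : ∀ t u : T, (δ t) • u = t * u * t⁻¹)
    -- crossed extension: p surjective with ker p = im δ
    (p : R →* G) (hp : Function.Surjective p)
    (hexact : ∀ r : R, p r = 1 ↔ r ∈ δ.range)
    -- s-section
    (s : G → R) (σ : G → G → T)
    (hs : ∀ x, p (s x) = x)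
    (hσ : ∀ x y, s x * s y = δ (σ x y) * s (x * y))
    -- the associated function f
    (f : G → G → G → T)
    (hf : ∀ x y z, f x y z =
      (s x • σ y z) * σ x (y * z) * (σ (x * y) z)⁻¹ * (σ x y)⁻¹) :
    (∀ x y z, f x y z ∈ δ.ker) ∧
    (∀ x y z w : G,
      (s x • f y z w) * (f (x * y) z w)⁻¹ * f x (y * z) w *
        (f x y (z * w))⁻¹ * f x y z = 1) := by
  have hδσ : ∀ x y, δ (σ x y) = s x * s y * (s (x*y))⁻¹ := fun x y => by
    rw [eq_mul_inv_iff_mul_eq]; exact (hσ x y).symm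
  have hker : ∀ x y z, δ (f x y z) = 1 := by
    intro x y z
    rw [hf]
    simp only [map_mul, map_inv, hpeif1, hδσ]
    rw [mul_assoc x y z]
    group
  have hcomm : ∀ t : T, δ t = 1 → ∀ u : T, t * u = u * t := by
    intro t ht u
    have h2 := hpeif2 t u
    rw [ht, one_smul] at h2
    conv_rhs => rw [h2]
    group
  have hconj : ∀ x y (t : T), s x • s y • t = σ x y * (s (x*y) • t) * (σ x y)⁻¹ := by
    intro x y t
    rw [← mul_smul, hσ x y, mul_smul, hpeif2]
  have hF : ∀ x y z, (s x • σ y z) * σ x (y*z) = f x y z * (σ x y * σ (x*y) z) := by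
    intro x y z; rw [hf]; group
  refine ⟨fun x y z => MonoidHom.mem_ker.mpr (hker x y z), ?_⟩
  intro x y z w
  have e1 : (s x • (s y • σ z w)) * (s x • σ y (z*w)) * σ x (y*(z*w))
      = s x • f y z w * (f x (y*z) w * (f x y z *
          (σ x y * (σ (x*y) z * σ (x*y*z) w)))) := by
    calc (s x • (s y • σ z w)) * (s x • σ y (z*w)) * σ x (y*(z*w))
        = (s x • ((s y • σ z w) * σ y (z*w))) * σ x (y*(z*w)) := by
          rw [← smul_mul']
      _ = (s x • (f y z w * (σ y z * σ (y*z) w))) * σ x (y*(z*w)) := by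
          rw [hF y z w]
      _ = (s x • f y z w * (s x • σ y z * s x • σ (y*z) w)) * σ x (y*(z*w)) := by
          rw [smul_mul', smul_mul']
      _ = s x • f y z w * (s x • σ y z * (s x • σ (y*z) w * σ x ((y*z)*w))) := by
          rw [← mul_assoc y z w]; group
      _ = s x • f y z w * (s x • σ y z * (f x (y*z) w * (σ x (y*z) * σ (x*(y*z)) w))) := by
          rw [hF x (y*z) w]
      _ = s x • f y z w * ((s x • σ y z * f x (y*z) w) * (σ x (y*z) * σ (x*(y*z)) w)) := by
          group
      _ = s x • f y z w * ((f x (y*z) w * s x • σ y z) * (σ x (y*z) * σ (x*(y*z)) w)) := by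
          rw [← hcomm _ (hker x (y*z) w) (s x • σ y z)]
      _ = s x • f y z w * (f x (y*z) w * ((s x • σ y z * σ x (y*z)) * σ (x*(y*z)) w)) := by
          group
      _ = s x • f y z w * (f x (y*z) w * ((f x y z * (σ x y * σ (x*y) z)) * σ (x*(y*z)) w)) := by
          rw [hF x y z]
      _ = s x • f y z w * (f x (y*z) w * (f x y z * (σ x y * (σ (x*y) z * σ (x*y*z) w)))) := by
          rw [← mul_assoc x y z]; group
  have e2 : (s x • (s y • σ z w)) * (s x • σ y (z*w)) * σ x (y*(z*w))
      = f x y (z*w) * (f (x*y) z w *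
          (σ x y * (σ (x*y) z * σ (x*y*z) w))) := by
    calc (s x • (s y • σ z w)) * (s x • σ y (z*w)) * σ x (y*(z*w))
        = (σ x y * (s (x*y) • σ z w) * (σ x y)⁻¹) * (s x • σ y (z*w)) * σ x (y*(z*w)) := by
          rw [hconj x y (σ z w)]
      _ = (σ x y * (s (x*y) • σ z w) * (σ x y)⁻¹) * ((s x • σ y (z*w)) * σ x (y*(z*w))) := by
          group
      _ = (σ x y * (s (x*y) • σ z w) * (σ x y)⁻¹) * (f x y (z*w) * (σ x y * σ (x*y) (z*w))) := by
          rw [hF x y (z*w)]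
      _ = σ x y * ((s (x*y) • σ z w) * (((σ x y)⁻¹ * f x y (z*w)) * (σ x y * σ (x*y) (z*w)))) := by
          group
      _ = σ x y * ((s (x*y) • σ z w) * ((f x y (z*w) * (σ x y)⁻¹) * (σ x y * σ (x*y) (z*w)))) := by
          rw [← hcomm _ (hker x y (z*w)) (σ x y)⁻¹]
      _ = σ x y * (((s (x*y) • σ z w) * f x y (z*w)) * σ (x*y) (z*w)) := by
          group
      _ = σ x y * ((f x y (z*w) * (s (x*y) • σ z w)) * σ (x*y) (z*w)) := by
          rw [← hcomm _ (hker x y (z*w)) (s (x*y) • σ z w)]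
      _ = σ x y * (f x y (z*w) * ((s (x*y) • σ z w) * σ (x*y) (z*w))) := by
          group
      _ = σ x y * (f x y (z*w) * (f (x*y) z w * (σ (x*y) z * σ (x*y*z) w))) := by
          rw [hF (x*y) z w]
      _ = (σ x y * f x y (z*w)) * (f (x*y) z w * (σ (x*y) z * σ (x*y*z) w)) := by
          group
      _ = (f x y (z*w) * σ x y) * (f (x*y) z w * (σ (x*y) z * σ (x*y*z) w)) := by
          rw [← hcomm _ (hker x y (z*w)) (σ x y)]
      _ = f x y (z*w) * ((σ x y * f (x*y) z w) * (σ (x*y) z * σ (x*y*z) w)) := by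
          group
      _ = f x y (z*w) * ((f (x*y) z w * σ x y) * (σ (x*y) z * σ (x*y*z) w)) := by
          rw [← hcomm _ (hker (x*y) z w) (σ x y)]
      _ = f x y (z*w) * (f (x*y) z w * (σ x y * (σ (x*y) z * σ (x*y*z) w))) := by
          group
  have hmain := e1.symm.trans e2
  simp only [← mul_assoc] at hmain
  have key : s x • f y z w * f x (y*z) w * f x y z
      = f x y (z*w) * f (x*y) z w :=
    mul_right_cancel (mul_right_cancel (mul_right_cancel hmain))
  have cBi : ∀ u : T, (f (x*y) z w)⁻¹ * u = u * (f (x*y) z w)⁻¹ :=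
    hcomm _ (by rw [map_inv, hker]; group)
  have cDi : ∀ u : T, (f x y (z*w))⁻¹ * u = u * (f x y (z*w))⁻¹ :=
    hcomm _ (by rw [map_inv, hker]; group)
  calc (s x • f y z w) * (f (x * y) z w)⁻¹ * f x (y * z) w *
        (f x y (z * w))⁻¹ * f x y z
      = s x • f y z w * (((f (x*y) z w)⁻¹ * f x (y*z) w) *
          ((f x y (z*w))⁻¹ * f x y z)) := by group
    _ = s x • f y z w * ((f x (y*z) w * (f (x*y) z w)⁻¹) *
          (f x y z * (f x y (z*w))⁻¹)) := by rw [cBi, cDi]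
    _ = (s x • f y z w * f x (y*z) w) * (((f (x*y) z w)⁻¹ * f x y z) *
          (f x y (z*w))⁻¹) := by group
    _ = (s x • f y z w * f x (y*z) w) * ((f x y z * (f (x*y) z w)⁻¹) *
          (f x y (z*w))⁻¹) := by rw [cBi]
    _ = (s x • f y z w * f x (y*z) w * f x y z) *
          ((f (x*y) z w)⁻¹ * (f x y (z*w))⁻¹) := by group
    _ = (f x y (z*w) * f (x*y) z w) *
          ((f (x*y) z w)⁻¹ * (f x y (z*w))⁻¹) := by rw [key]
    _ = 1 := by group
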